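/- Let q = p^k be a prime power and let S = {a ∈ F_q : tr_{F_q/F_p}(a) = 0}, where tr_{F_q/F_p} denotes the field trace. Then irreg(S) = p. -/

import Mathlib

noncomputable section

/-- The standard additive character of a finite field of characteristic `p`. -/
def psiChar (p : ℕ) (Fq : Type) [Field Fq] [Fintype Fq] [Algebra (ZMod p) Fq] (u : Fq) : ℂ :=
  Complex.exp (2 * Real.pi * Complex.I * ((Algebra.trace (ZMod p) Fq u).val : ℂ) / (p : ℂ))

/-- Fourier transform of the indicator function of `S ⊆ F_q`. -/
def hatQ (p : ℕ) (Fq : Type) [Field Fq] [Fintype Fq] [Algebra (ZMod p) Fq]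
    (S : Set Fq) (b : Fq) : ℂ :=
  (Fintype.card Fq : ℂ)⁻¹ * ∑ a : Fq, S.indicator (fun _ => (1 : ℂ)) a * psiChar p Fq (-(a * b))

/-- The irregularity of a subset `S ⊆ F_q`. -/
def irregQ (p : ℕ) (Fq : Type) [Field Fq] [Fintype Fq] [Algebra (ZMod p) Fq] (S : Set Fq) : ℝ :=
  ((Fintype.card Fq : ℝ) / S.ncard) * ∑ b : Fq, ‖hatQ p Fq S b‖

set_option linter.unusedSectionVars false

section Aux

open Finset
open scoped Classical

variable (p : ℕ) [Fact p.Prime] (Fq : Type) [Field Fq] [Fintype Fq] [Algebra (ZMod p) Fq]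

instance : FiniteDimensional (ZMod p) Fq := Module.Finite.of_finite

/-- `psiChar` as an additive character. -/
def psiA : AddChar Fq ℂ :=
  ZMod.stdAddChar.compAddMonoidHom (Algebra.trace (ZMod p) Fq).toAddMonoidHom

lemma psiA_apply (u : Fq) : psiA p Fq u = ZMod.stdAddChar (Algebra.trace (ZMod p) Fq u) := rfl

lemma psiChar_eq_psiA (u : Fq) : psiChar p Fq u = psiA p Fq u := by
  set x := Algebra.trace (ZMod p) Fq u with hx
  have h : x = ((x.val : ℤ) : ZMod p) := by
    push_cast
    rw [ZMod.natCast_val, ZMod.cast_id]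
  rw [psiA_apply, ← hx, h, ZMod.stdAddChar_coe]
  unfold psiChar
  push_cast
  rw [← hx]

lemma exists_trace_mul_ne_zero {c : Fq} (hc : c ≠ 0) :
    ∃ a : Fq, Algebra.trace (ZMod p) Fq (a * c) ≠ 0 := by
  have h0 : Algebra.trace (ZMod p) Fq ≠ 0 := Algebra.trace_ne_zero (ZMod p) Fq
  obtain ⟨x, hx⟩ := DFunLike.ne_iff.mp h0
  refine ⟨x * c⁻¹, ?_⟩
  rwa [mul_assoc, inv_mul_cancel₀ hc, mul_one]

lemma sum_psiA_mul (c : Fq) :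
    ∑ a : Fq, psiA p Fq (a * c) = if c = 0 then (Fintype.card Fq : ℂ) else 0 := by
  classical
  split_ifs with h
  · simp [h, AddChar.map_zero_eq_one, Finset.card_univ]
  · have hne : (psiA p Fq).mulShift c ≠ 1 := by
      intro H
      obtain ⟨a, ha⟩ := exists_trace_mul_ne_zero p Fq h
      have h1 : psiA p Fq (c * a) = 1 := by
        rw [← AddChar.mulShift_apply (ψ := psiA p Fq) (r := c) (x := a), H]
        rfl
      rw [psiA_apply, mul_comm] at h1
      have := ZMod.injective_stdAddChar (N := p)
        (by rw [h1, AddChar.map_zero_eq_one] : ZMod.stdAddChar (Algebra.trace (ZMod p) Fq (a * c))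
          = ZMod.stdAddChar 0)
      exact ha this
    have := AddChar.sum_eq_zero_of_ne_one hne
    calc ∑ a : Fq, psiA p Fq (a * c) = ∑ a : Fq, (psiA p Fq).mulShift c a := by
          simp [AddChar.mulShift_apply, mul_comm]
      _ = 0 := this

lemma sum_stdAddChar_mul (x : ZMod p) :
    ∑ t : ZMod p, ZMod.stdAddChar (t * x) = if x = 0 then (p : ℂ) else 0 := by
  split_ifs with h
  · simp [h, AddChar.map_zero_eq_one, Finset.card_univ, ZMod.card]
  · have hne := ZMod.isPrimitive_stdAddChar p h
    have := AddChar.sum_eq_zero_of_ne_one hne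
    calc ∑ t : ZMod p, ZMod.stdAddChar (t * x)
        = ∑ t : ZMod p, (ZMod.stdAddChar (N := p)).mulShift x t := by
          simp [AddChar.mulShift_apply, mul_comm]
      _ = 0 := this

end Aux

/-- The irregularity of the trace-zero hyperplane `S ⊆ F_q` equals `p`. -/
theorem irreg_trace_zero_set (p k : ℕ) (hp : p.Prime) (hk : 1 ≤ k)
    (Fq : Type) [Field Fq] [Fintype Fq] [Algebra (ZMod p) Fq]
    (hcard : Fintype.card Fq = p ^ k) :
    irregQ p Fq {a : Fq | Algebra.trace (ZMod p) Fq a = 0} = p := by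
  classical
  haveI : Fact p.Prime := ⟨hp⟩
  set S : Set Fq := {a : Fq | Algebra.trace (ZMod p) Fq a = 0} with hS
  have hp0 : (p : ℂ) ≠ 0 := by exact_mod_cast hp.ne_zero
  have hq0 : (Fintype.card Fq : ℂ) ≠ 0 := by
    exact_mod_cast Fintype.card_ne_zero
  -- the key sum
  have key : ∀ b : Fq, ∑ a : Fq, S.indicator (fun _ => (1 : ℂ)) a * psiChar p Fq (-(a * b))
      = if ∃ t : ZMod p, algebraMap (ZMod p) Fq t = b then (Fintype.card Fq : ℂ) / p else 0 := by
    intro b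
    have step1 : ∀ a : Fq, S.indicator (fun _ => (1 : ℂ)) a
        = (p : ℂ)⁻¹ * ∑ t : ZMod p, ZMod.stdAddChar (t * Algebra.trace (ZMod p) Fq a) := by
      intro a
      rw [sum_stdAddChar_mul, Set.indicator_apply]
      simp only [hS, Set.mem_setOf_eq]
      split_ifs with h
      · rw [inv_mul_cancel₀ hp0]
      · rw [mul_zero]
    calc ∑ a : Fq, S.indicator (fun _ => (1 : ℂ)) a * psiChar p Fq (-(a * b))
        = (p : ℂ)⁻¹ * ∑ a : Fq, ∑ t : ZMod p,
            ZMod.stdAddChar (t * Algebra.trace (ZMod p) Fq a) * psiA p Fq (-(a * b)) := by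
          rw [Finset.mul_sum]
          refine Finset.sum_congr rfl fun a _ => ?_
          rw [step1 a, psiChar_eq_psiA, mul_assoc, Finset.sum_mul]
      _ = (p : ℂ)⁻¹ * ∑ t : ZMod p, ∑ a : Fq,
            psiA p Fq (a * (algebraMap (ZMod p) Fq t - b)) := by
          rw [Finset.sum_comm]
          congr 1
          refine Finset.sum_congr rfl fun t _ => Finset.sum_congr rfl fun a _ => ?_
          have h1 : t * Algebra.trace (ZMod p) Fq a
              = Algebra.trace (ZMod p) Fq (algebraMap (ZMod p) Fq t * a) := by
            rw [← Algebra.smul_def, map_smul, smul_eq_mul]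
          rw [h1, ← psiA_apply, ← AddChar.map_add_eq_mul]
          ring_nf
      _ = (p : ℂ)⁻¹ * ∑ t : ZMod p,
            (if algebraMap (ZMod p) Fq t = b then (Fintype.card Fq : ℂ) else 0) := by
          congr 1
          refine Finset.sum_congr rfl fun t _ => ?_
          rw [sum_psiA_mul]
          simp only [sub_eq_zero]
      _ = if ∃ t : ZMod p, algebraMap (ZMod p) Fq t = b then (Fintype.card Fq : ℂ) / p else 0 := by
          by_cases h : ∃ t : ZMod p, algebraMap (ZMod p) Fq t = b
          · obtain ⟨t0, ht0⟩ := h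
            have huniq : ∀ t : ZMod p, (algebraMap (ZMod p) Fq t = b) ↔ t = t0 := by
              intro t
              constructor
              · intro h'
                exact (algebraMap (ZMod p) Fq).injective (h'.trans ht0.symm)
              · rintro rfl; exact ht0
            rw [if_pos ⟨t0, ht0⟩]
            simp only [huniq]
            rw [Finset.sum_ite_eq' Finset.univ t0 (fun _ => (Fintype.card Fq : ℂ)),
              if_pos (Finset.mem_univ _)]
            field_simp
          · rw [if_neg h]
            push_neg at h
            rw [Finset.sum_eq_zero (fun t _ => if_neg (h t)), mul_zero]
  -- hatQ values
  have hhat : ∀ b : Fq, hatQ p Fq S b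
      = if ∃ t : ZMod p, algebraMap (ZMod p) Fq t = b then (p : ℂ)⁻¹ else 0 := by
    intro b
    rw [hatQ, key b]
    split_ifs with h
    · field_simp
    · rw [mul_zero]
  -- cardinality of S
  have hcardS : (S.ncard : ℂ) * p = (Fintype.card Fq : ℂ) := by
    have h0 := key 0
    have hl : ∑ a : Fq, S.indicator (fun _ => (1 : ℂ)) a * psiChar p Fq (-(a * 0))
        = (S.ncard : ℂ) := by
      have hone : ∀ a : Fq, psiChar p Fq (-(a * 0)) = 1 := by
        intro a
        rw [mul_zero, neg_zero, psiChar_eq_psiA, AddChar.map_zero_eq_one]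
      simp only [hone, mul_one]
      rw [Set.ncard_eq_toFinset_card' S]
      rw [← Set.filter_mem_univ_eq_toFinset S]
      simp [Set.indicator_apply]
      convert Finset.sum_boole (fun x => x ∈ S) Finset.univ
    have hr : (if ∃ t : ZMod p, algebraMap (ZMod p) Fq t = (0 : Fq)
        then (Fintype.card Fq : ℂ) / p else 0) = (Fintype.card Fq : ℂ) / p := by
      rw [if_pos ⟨0, map_zero _⟩]
    rw [hl, hr] at h0
    rw [h0]
    field_simp
  have hcardS' : S.ncard * p = p ^ k := by
    have : ((S.ncard * p : ℕ) : ℂ) = ((p ^ k : ℕ) : ℂ) := by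
      push_cast
      rw [hcardS, hcard]
      push_cast
      ring
    exact_mod_cast this
  have hncard : S.ncard = p ^ (k - 1) := by
    have hpk : p ^ k = p ^ (k - 1) * p := by
      rw [← pow_succ]
      congr 1
      omega
    exact Nat.eq_of_mul_eq_mul_right hp.pos (by rw [hcardS', hpk])
  -- sum of absolute values
  have habs : ∑ b : Fq, ‖hatQ p Fq S b‖ = 1 := by
    have h1 : ∀ b : Fq, ‖hatQ p Fq S b‖
        = if ∃ t : ZMod p, algebraMap (ZMod p) Fq t = b then (p : ℝ)⁻¹ else 0 := by
      intro b
      rw [hhat b]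
      split_ifs with h
      · rw [norm_inv, Complex.norm_natCast]
      · exact norm_zero
    simp only [h1]
    rw [← Finset.sum_filter]
    have hfil : Finset.univ.filter (fun b : Fq => ∃ t : ZMod p, algebraMap (ZMod p) Fq t = b)
        = Finset.univ.image (algebraMap (ZMod p) Fq) := by
      ext b
      simp [eq_comm]
    rw [hfil, Finset.sum_const,
      Finset.card_image_of_injective _ (algebraMap (ZMod p) Fq).injective,
      Finset.card_univ, ZMod.card, nsmul_eq_mul]
    have hpR : (p : ℝ) ≠ 0 := by exact_mod_cast hp.ne_zero
    field_simp
  -- finish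
  rw [irregQ, habs, mul_one, hncard, hcard]
  have h1 : ((p : ℝ) ^ (k - 1)) ≠ 0 := pow_ne_zero _ (by exact_mod_cast hp.ne_zero)
  push_cast
  rw [div_eq_iff h1, ← pow_succ']
  congr 1
  omega
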